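/- For every ξ ∈ ℝ² and every x ∈ ℝ² with x ≠ ξ, the function G(x) = ‖x − ξ‖² (log‖x − ξ‖ − 1)/(8π) is twice differentiable at x and ΔG(x) = (1/(2π)) log‖x − ξ‖. That is, G is a generalized Green's function for the Laplacian on ℝ² whose Laplacian equals the singular part t_s(x, ξ) = (1/(2π)) log‖x − ξ‖ away from the singularity. -/

import Mathlib

open MeasureTheory

/-- The Laplacian of `u : ℝⁿ → ℝ` at `x`: the sum of the second partial derivatives
of `u` along the standard basis directions. -/
noncomputable def laplacian {n : ℕ} (u : EuclideanSpace ℝ (Fin n) → ℝ)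
    (x : EuclideanSpace ℝ (Fin n)) : ℝ :=
  ∑ i : Fin n,
    fderiv ℝ (fun y => fderiv ℝ u y (EuclideanSpace.single i 1)) x (EuclideanSpace.single i 1)

private lemma green_hQ (ξ y : EuclideanSpace ℝ (Fin 2)) :
    HasFDerivAt (fun y => ‖y - ξ‖ ^ 2) (2 • innerSL ℝ (y - ξ)) y := by
  simpa using ((hasFDerivAt_id y).sub_const ξ).norm_sq

private lemma green_hfun (ξ : EuclideanSpace ℝ (Fin 2)) :
    (fun y : EuclideanSpace ℝ (Fin 2) => ‖y - ξ‖ ^ 2 * (Real.log ‖y - ξ‖ - 1) / (8 * Real.pi))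
      = (fun t : ℝ => t * (Real.log t / 2 - 1) / (8 * Real.pi)) ∘ (fun y => ‖y - ξ‖ ^ 2) := by
  funext y
  simp only [Function.comp_apply, Real.log_pow]
  push_cast
  ring

private lemma green_hG1 (ξ y : EuclideanSpace ℝ (Fin 2)) (hy : y ≠ ξ) :
    HasFDerivAt (fun y => ‖y - ξ‖ ^ 2 * (Real.log ‖y - ξ‖ - 1) / (8 * Real.pi))
      (((Real.log (‖y - ξ‖ ^ 2) - 1) / (8 * Real.pi)) • innerSL ℝ (y - ξ)) y := by
  have hr : (0 : ℝ) < ‖y - ξ‖ := norm_pos_iff.mpr (sub_ne_zero.mpr hy)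
  have ht : (‖y - ξ‖ ^ 2 : ℝ) ≠ 0 := by positivity
  have hφ : HasDerivAt (fun t : ℝ => t * (Real.log t / 2 - 1) / (8 * Real.pi))
      ((Real.log (‖y - ξ‖ ^ 2) - 1) / (16 * Real.pi)) (‖y - ξ‖ ^ 2) := by
    have := ((hasDerivAt_id' (‖y - ξ‖ ^ 2)).fun_mul
      (((Real.hasDerivAt_log ht).div_const 2).sub_const 1)).div_const (8 * Real.pi)
    refine this.congr_deriv ?_
    have hpi : Real.pi ≠ 0 := Real.pi_ne_zero
    field_simp
    ring
  rw [green_hfun]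
  have := hφ.comp_hasFDerivAt y (green_hQ ξ y)
  refine this.congr_fderiv ?_
  ext v
  simp only [ContinuousLinearMap.coe_smul', Pi.smul_apply, ContinuousLinearMap.smul_apply,
    smul_eq_mul]
  ring

private lemma green_hsecond (ξ x : EuclideanSpace ℝ (Fin 2)) (hx : x ≠ ξ) (i : Fin 2) :
    fderiv ℝ (fun y => fderiv ℝ
        (fun y => ‖y - ξ‖ ^ 2 * (Real.log ‖y - ξ‖ - 1) / (8 * Real.pi)) y
        (EuclideanSpace.single i 1)) x (EuclideanSpace.single i 1)
      = (‖x - ξ‖ ^ 2)⁻¹ / (8 * Real.pi) * (2 * (x i - ξ i)) * (x i - ξ i)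
        + (Real.log (‖x - ξ‖ ^ 2) - 1) / (8 * Real.pi) := by
  have hr : (0 : ℝ) < ‖x - ξ‖ := norm_pos_iff.mpr (sub_ne_zero.mpr hx)
  have ht : (‖x - ξ‖ ^ 2 : ℝ) ≠ 0 := by positivity
  have hev : (fun y => fderiv ℝ
        (fun y => ‖y - ξ‖ ^ 2 * (Real.log ‖y - ξ‖ - 1) / (8 * Real.pi)) y
        (EuclideanSpace.single i 1))
      =ᶠ[nhds x] fun y => ((Real.log (‖y - ξ‖ ^ 2) - 1) / (8 * Real.pi)) * (y i - ξ i) := by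
    filter_upwards [IsOpen.mem_nhds isOpen_ne hx] with y hy
    rw [(green_hG1 ξ y hy).fderiv]
    simp only [ContinuousLinearMap.smul_apply, innerSL_apply_apply,
      EuclideanSpace.inner_single_right, conj_trivial, PiLp.sub_apply, smul_eq_mul, one_mul]
  rw [hev.fderiv_eq]
  have hc : HasFDerivAt
      (fun y : EuclideanSpace ℝ (Fin 2) => (Real.log (‖y - ξ‖ ^ 2) - 1) / (8 * Real.pi))
      (((‖x - ξ‖ ^ 2)⁻¹ / (8 * Real.pi)) • (2 • innerSL ℝ (x - ξ))) x := by
    have := (((Real.hasDerivAt_log ht).sub_const 1).div_const (8 * Real.pi)).comp_hasFDerivAt x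
      (green_hQ ξ x)
    exact this
  have hcoord : HasFDerivAt (fun y : EuclideanSpace ℝ (Fin 2) => y i - ξ i)
      ((EuclideanSpace.proj i : EuclideanSpace ℝ (Fin 2) →L[ℝ] ℝ)) x := by
    simpa using (EuclideanSpace.proj i (𝕜 := ℝ)).hasFDerivAt.sub_const (ξ i)
  rw [(hc.fun_mul hcoord).fderiv]
  have hproj : ∀ v : EuclideanSpace ℝ (Fin 2),
      (EuclideanSpace.proj i : EuclideanSpace ℝ (Fin 2) →L[ℝ] ℝ) v = v i := fun _ => rfl
  simp only [ContinuousLinearMap.add_apply, ContinuousLinearMap.smul_apply, innerSL_apply_apply,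
    EuclideanSpace.inner_single_right, conj_trivial, PiLp.sub_apply, smul_eq_mul, one_mul,
    hproj, EuclideanSpace.single_apply, if_pos rfl]
  simp only [if_true]
  ring

/-- The 2D generalized Green's function `G(x) = ‖x − ξ‖²(log‖x − ξ‖ − 1)/(8π)` is twice
differentiable away from the singularity, where its Laplacian equals the singular part
`t_s(x, ξ) = (1/(2π)) log‖x − ξ‖`. -/
theorem generalized_green_2d (ξ x : EuclideanSpace ℝ (Fin 2)) (hx : x ≠ ξ) :
    ContDiffAt ℝ 2 (fun y => ‖y - ξ‖ ^ 2 * (Real.log ‖y - ξ‖ - 1) / (8 * Real.pi)) x ∧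
      laplacian (fun y => ‖y - ξ‖ ^ 2 * (Real.log ‖y - ξ‖ - 1) / (8 * Real.pi)) x =
        (1 / (2 * Real.pi)) * Real.log ‖x - ξ‖ := by
  have hr : (0 : ℝ) < ‖x - ξ‖ := norm_pos_iff.mpr (sub_ne_zero.mpr hx)
  have ht : (‖x - ξ‖ ^ 2 : ℝ) ≠ 0 := by positivity
  constructor
  · rw [green_hfun]
    have houter : ContDiffAt ℝ 2 (fun t : ℝ => t * (Real.log t / 2 - 1) / (8 * Real.pi))
        (‖x - ξ‖ ^ 2) :=
      (contDiffAt_id.mul (((Real.contDiffAt_log.mpr ht).div_const 2).sub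
        contDiffAt_const)).div_const _
    exact houter.comp x ((contDiff_norm_sq ℝ).contDiffAt.comp x
      (contDiffAt_id.sub contDiffAt_const))
  · have hsum : (x 0 - ξ 0) ^ 2 + (x 1 - ξ 1) ^ 2 = ‖x - ξ‖ ^ 2 := by
      rw [← real_inner_self_eq_norm_sq]
      simp only [PiLp.inner_apply, RCLike.inner_apply, conj_trivial, Fin.sum_univ_two,
        PiLp.sub_apply]
      ring
    unfold laplacian
    rw [Finset.sum_congr rfl fun i _ => green_hsecond ξ x hx i]
    simp only [Fin.sum_univ_two]
    rw [Real.log_pow]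
    push_cast
    rw [← hsum] at ht ⊢
    field_simp
    ring
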